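/- Let K be a simplicial complex on [m]. The quotient map Λ(ω₁,…,ω_m) ⊗ SR⟨K⟩ → R̄(K) := Λ(ω₁,…,ω_m) ⊗ SR⟨K⟩ / (y_i², ω_iy_i) is a quasi-isomorphism of differential graded algebras. -/

import Mathlib

/-!
STATEMENT 4.  The quotient map `Λ(ω₁,…,ω_m) ⊗ SR⟨K⟩ → R̄(K)` is a
quasi-isomorphism of differential graded algebras.

`Λ(ω) ⊗ SR⟨K⟩` is modelled by its monomial basis `(I, f)` ↔ `ω_I y^f`
(supported on pairs with `supp f ∈ K`), with differential
`d(ω_I y^f) = ∑_{i∈I} ±ω_{I∖i} y^{f+eᵢ}` and product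
`(ω_I y^f)(ω_{I'} y^{f'}) = ± ω_{I∪I'} y^{f+f'}` (zero when `I ∩ I' ≠ ∅` or the
`y`-support is a non-face).  `R̄(K) = Λ(ω)⊗SR⟨K⟩/(yᵢ², ωᵢyᵢ)` is modelled by its
monomial basis `(I, L)` ↔ `ω_I y_L` supported on pairs with `I ∩ L = ∅`, `L ∈ K`.
The quotient map `q` sends `ω_I y^f` to `ω_I y_{supp f}` when `f` is square-free
and `I ∩ supp f = ∅`, and to `0` otherwise.  The theorem: `q` is a map of dgas
(chain map, multiplicative on monomials) inducing an isomorphism on cohomology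
(restricted to the supported submodules, surjectivity and injectivity on `H`).
-/

open Finsupp

variable (k : Type) [CommRing k] (m : ℕ) (K : Finset (Fin m) → Prop) [DecidablePred K]

abbrev LSRMod (k : Type) [CommRing k] (m : ℕ) := (Finset (Fin m) × (Fin m →₀ ℕ)) →₀ k
abbrev RbarMod (k : Type) [CommRing k] (m : ℕ) := (Finset (Fin m) × Finset (Fin m)) →₀ k

/-- `∑_{i∈A} #{j∈B : j<i}`, the number of ω-inversions between `A` and `B`. -/
def invCount (A B : Finset (Fin m)) : ℕ := ∑ i ∈ A, (B.filter fun j => j < i).card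

noncomputable def dLSR : LSRMod k m →ₗ[k] LSRMod k m :=
  Finsupp.lift (LSRMod k m) k _ fun p =>
    ∑ i ∈ p.1,
      if K (insert i p.2.support) then
        Finsupp.single (p.1.erase i, p.2 + Finsupp.single i 1)
          ((-1 : k) ^ ((p.1.filter fun j => j ≤ i).card + 1))
      else 0

noncomputable def dRbar : RbarMod k m →ₗ[k] RbarMod k m :=
  Finsupp.lift (RbarMod k m) k _ fun p =>
    ∑ i ∈ p.1,
      if i ∉ p.2 ∧ K (insert i p.2) then
        Finsupp.single (p.1.erase i, insert i p.2)
          ((-1 : k) ^ ((p.1.filter fun j => j ≤ i).card + 1))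
      else 0

/-- Product on `Λ(ω)⊗SR⟨K⟩`. -/
noncomputable def mulLSR : LSRMod k m →ₗ[k] LSRMod k m →ₗ[k] LSRMod k m :=
  Finsupp.lift _ k _ fun p => Finsupp.lift (LSRMod k m) k _ fun q =>
    if Disjoint p.1 q.1 ∧ K (p.2 + q.2).support then
      Finsupp.single (p.1 ∪ q.1, p.2 + q.2) ((-1 : k) ^ invCount m p.1 q.1)
    else 0

/-- Product on `R̄(K)`: any repeated index gives `ωᵢ²`, `ωᵢyᵢ`, `yᵢωᵢ` or `yᵢ²`, hence `0`. -/
noncomputable def mulRbar : RbarMod k m →ₗ[k] RbarMod k m →ₗ[k] RbarMod k m :=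
  Finsupp.lift _ k _ fun p => Finsupp.lift (RbarMod k m) k _ fun q =>
    if Disjoint (p.1 ∪ p.2) (q.1 ∪ q.2) ∧ K (p.2 ∪ q.2) then
      Finsupp.single (p.1 ∪ q.1, p.2 ∪ q.2) ((-1 : k) ^ invCount m p.1 q.1)
    else 0

/-- The quotient map `Λ(ω)⊗SR⟨K⟩ → R̄(K)`. -/
noncomputable def qMap : LSRMod k m →ₗ[k] RbarMod k m :=
  Finsupp.lift (RbarMod k m) k _ fun p =>
    if (∀ i, p.2 i ≤ 1) ∧ Disjoint p.1 p.2.support then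
      Finsupp.single (p.1, p.2.support) 1
    else 0

-- ===== auxiliary =====

lemma lift_single' {α M : Type*} [AddCommMonoid M] [Module k M] (g : α → M) (a : α) (c : k) :
    (Finsupp.lift M k α g) (single a c) = c • g a := by
  simp [Finsupp.lift_apply, Finsupp.sum_single_index]

variable {k m K}

lemma dLSR_single (p : Finset (Fin m) × (Fin m →₀ ℕ)) (c : k) :
    dLSR k m K (single p c) = c • ∑ i ∈ p.1,
      (if K (insert i p.2.support) then
        Finsupp.single (p.1.erase i, p.2 + Finsupp.single i 1)
          ((-1 : k) ^ ((p.1.filter fun j => j ≤ i).card + 1))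
      else 0) :=
  lift_single' k _ _ _

lemma dRbar_single (p : Finset (Fin m) × Finset (Fin m)) (c : k) :
    dRbar k m K (single p c) = c • ∑ i ∈ p.1,
      (if i ∉ p.2 ∧ K (insert i p.2) then
        Finsupp.single (p.1.erase i, insert i p.2)
          ((-1 : k) ^ ((p.1.filter fun j => j ≤ i).card + 1))
      else 0) :=
  lift_single' k _ _ _

lemma qMap_single (p : Finset (Fin m) × (Fin m →₀ ℕ)) (c : k) :
    qMap k m (single p c) = c • (if (∀ i, p.2 i ≤ 1) ∧ Disjoint p.1 p.2.support then
      Finsupp.single (p.1, p.2.support) (1:k) else 0) :=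
  lift_single' k _ _ _

lemma mulLSR_single (p q : Finset (Fin m) × (Fin m →₀ ℕ)) (c d : k) :
    mulLSR k m K (single p c) (single q d) = (c*d) •
      (if Disjoint p.1 q.1 ∧ K (p.2 + q.2).support then
        Finsupp.single (p.1 ∪ q.1, p.2 + q.2) ((-1 : k) ^ invCount m p.1 q.1)
      else 0) := by
  rw [mulLSR, lift_single']
  simp only [LinearMap.smul_apply, lift_single', mul_smul]

lemma mulRbar_single (p q : Finset (Fin m) × Finset (Fin m)) (c d : k) :
    mulRbar k m K (single p c) (single q d) = (c*d) •
      (if Disjoint (p.1 ∪ p.2) (q.1 ∪ q.2) ∧ K (p.2 ∪ q.2) then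
        Finsupp.single (p.1 ∪ q.1, p.2 ∪ q.2) ((-1 : k) ^ invCount m p.1 q.1)
      else 0) := by
  rw [mulRbar, lift_single']
  simp only [LinearMap.smul_apply, lift_single', mul_smul]

/-- square-free finsupp with support L -/
def chi (L : Finset (Fin m)) : Fin m →₀ ℕ :=
  ⟨L, fun i => if i ∈ L then 1 else 0, by intro a; simp⟩

@[simp] lemma chi_apply (L : Finset (Fin m)) (i : Fin m) : chi L i = if i ∈ L then 1 else 0 := rfl
@[simp] lemma chi_support (L : Finset (Fin m)) : (chi L).support = L := rfl

lemma chi_sqfree (L : Finset (Fin m)) (i : Fin m) : chi L i ≤ 1 := by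
  simp [chi_apply]; split <;> simp

lemma chi_add_single {L : Finset (Fin m)} {i : Fin m} (h : i ∉ L) :
    chi L + single i 1 = chi (insert i L) := by
  ext j
  simp only [Finsupp.add_apply, chi_apply, single_apply, Finset.mem_insert]
  by_cases h2 : j = i <;> simp_all [eq_comm]

lemma sqfree_eq_chi {f : Fin m →₀ ℕ} (h : ∀ i, f i ≤ 1) : f = chi f.support := by
  ext j
  simp only [chi_apply, mem_support_iff]
  have := h j
  split <;> omega

lemma sub_support {f : Fin m →₀ ℕ} {b : Fin m} (h : 2 ≤ f b) :
    (f - single b 1).support = f.support := by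
  ext i
  simp only [Finsupp.mem_support_iff, Finsupp.tsub_apply, Finsupp.single_apply]
  by_cases h2 : b = i <;> simp_all <;> omega

lemma subAddCancel {f : Fin m →₀ ℕ} {b : Fin m} (h : 1 ≤ f b) :
    f - single b 1 + single b 1 = f := by
  ext i
  simp only [Finsupp.add_apply, Finsupp.tsub_apply, Finsupp.single_apply]
  by_cases h2 : b = i <;> simp_all

lemma subAddComm {f : Fin m →₀ ℕ} {b i : Fin m} (hb : 1 ≤ f b) :
    f - single b 1 + single i 1 = f + single i 1 - single b 1 := by
  ext j
  simp only [Finsupp.add_apply, Finsupp.tsub_apply, Finsupp.single_apply]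
  by_cases h2 : b = j <;> by_cases h3 : i = j <;> simp_all <;> omega

lemma add_single_support (f : Fin m →₀ ℕ) (i : Fin m) :
    (f + single i 1).support = insert i f.support := by
  ext j
  simp only [Finsupp.mem_support_iff, Finsupp.add_apply, Finsupp.single_apply, Finset.mem_insert]
  by_cases h2 : i = j <;> simp_all [eq_comm]

-- supported machinery
lemma eqOn_supported {α : Type*} {M : Type*} [AddCommMonoid M] [Module k M]
    (F G : (α →₀ k) →ₗ[k] M) {S : Set α}
    (h : ∀ p ∈ S, F (single p 1) = G (single p 1)) :
    ∀ y ∈ Finsupp.supported k k S, F y = G y := by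
  intro y hy
  rw [Finsupp.mem_supported] at hy
  rw [← Finsupp.sum_single y, map_finsuppSum, map_finsuppSum]
  refine Finset.sum_congr rfl fun p hp => ?_
  show F (single p (y p)) = G (single p (y p))
  have : single p (y p) = (y p) • single p (1:k) := by rw [smul_single, smul_eq_mul, mul_one]
  rw [this, map_smul, map_smul, h p (hy hp)]

lemma maps_supported {α β : Type*} (F : (α →₀ k) →ₗ[k] (β →₀ k)) {S : Set α} {T : Set β}
    (h : ∀ p ∈ S, F (single p 1) ∈ Finsupp.supported k k T) :
    ∀ y ∈ Finsupp.supported k k S, F y ∈ Finsupp.supported k k T := by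
  intro y hy
  rw [Finsupp.mem_supported] at hy
  rw [← Finsupp.sum_single y, map_finsuppSum]
  refine Submodule.sum_mem _ fun p hp => ?_
  show F (single p (y p)) ∈ _
  have : single p (y p) = (y p) • single p (1:k) := by rw [smul_single, smul_eq_mul, mul_one]
  rw [this, map_smul]
  exact Submodule.smul_mem _ _ (h p (hy hp))

lemma single_mem_supported' {α : Type*} {S : Set α} {p : α} (hp : p ∈ S) (c : k) :
    single p c ∈ Finsupp.supported k k S := by
  rw [Finsupp.mem_supported]
  intro a ha
  have := Finsupp.support_single_subset ha
  simp only [Finset.mem_singleton] at this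
  subst this; exact hp

def IsBad (p : Finset (Fin m) × (Fin m →₀ ℕ)) : Prop :=
  ∃ i, 2 ≤ p.2 i ∨ (i ∈ p.1 ∧ 1 ≤ p.2 i)

lemma not_good_iff (p : Finset (Fin m) × (Fin m →₀ ℕ)) :
    ¬((∀ i, p.2 i ≤ 1) ∧ Disjoint p.1 p.2.support) ↔ IsBad p := by
  rw [Finset.disjoint_left]
  constructor
  · intro h
    by_cases h1 : ∀ i, p.2 i ≤ 1
    · have h2 := (not_and.mp h) h1
      push_neg at h2
      obtain ⟨a, ha, ha2⟩ := h2
      rw [Finsupp.mem_support_iff] at ha2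
      exact ⟨a, Or.inr ⟨ha, by omega⟩⟩
    · push_neg at h1
      obtain ⟨a, ha⟩ := h1
      exact ⟨a, Or.inl (by omega)⟩
  · rintro ⟨i, hi | ⟨hi1, hi2⟩⟩
    · rintro ⟨h1, -⟩; have := h1 i; omega
    · rintro ⟨-, h2⟩
      exact h2 hi1 (Finsupp.mem_support_iff.mpr (by omega))

lemma chainMap (K : Finset (Fin m) → Prop) [DecidablePred K] :
    (qMap k m).comp (dLSR k m K) = (dRbar k m K).comp (qMap k m) := by
  apply Finsupp.lhom_ext
  intro p c
  obtain ⟨I, f⟩ := p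
  simp only [LinearMap.comp_apply]
  rw [dLSR_single, map_smul, map_sum, qMap_single, map_smul]
  congr 1
  rw [apply_ite (dRbar k m K), map_zero]
  by_cases hg : (∀ i, (I, f).2 i ≤ 1) ∧ Disjoint (I, f).1 (I, f).2.support
  · obtain ⟨hsq, hdisj⟩ := hg
    simp only at hsq hdisj
    rw [if_pos ⟨hsq, hdisj⟩, dRbar_single, one_smul]
    refine Finset.sum_congr rfl fun i hi => ?_
    simp only at hi ⊢
    rw [apply_ite (qMap k m), map_zero, qMap_single]
    have hgood' : ((∀ a, ((f + single i 1 : Fin m →₀ ℕ)) a ≤ 1) ∧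
        Disjoint (I.erase i) (f + single i 1).support) ↔ i ∉ f.support := by
      constructor
      · rintro ⟨h1, -⟩ hs
        have h2 := h1 i
        rw [Finsupp.add_apply, Finsupp.single_eq_same] at h2
        rw [Finsupp.mem_support_iff] at hs
        omega
      · intro hs
        have hfi : f i = 0 := Finsupp.notMem_support_iff.mp hs
        constructor
        · intro a
          rw [Finsupp.add_apply, Finsupp.single_apply]
          by_cases h : i = a
          · subst h; simp [hfi]
          · simp only [if_neg h, add_zero]; exact hsq a
        · rw [add_single_support, Finset.disjoint_left]
          intro a ha
          obtain ⟨han, haI⟩ := Finset.mem_erase.mp ha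
          simp only [Finset.mem_insert]
          push_neg
          exact ⟨han, Finset.disjoint_left.mp hdisj haI⟩
    by_cases hs : i ∈ f.support
    · rw [if_neg (fun hc => (hgood'.mp hc) hs), smul_zero, ite_self,
        if_neg (fun hc : (i ∉ f.support) ∧ K (insert i f.support) => hc.1 hs)]
    · by_cases hK : K (insert i f.support)
      · rw [if_pos hK, if_pos (hgood'.mpr hs), if_pos ⟨hs, hK⟩, smul_single, smul_eq_mul,
          mul_one, add_single_support]
      · rw [if_neg hK, if_neg (fun hc : (i ∉ f.support) ∧ K (insert i f.support) => hK hc.2)]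
  · rw [if_neg hg]
    simp only at hg
    rw [not_good_iff (I, f)] at hg
    obtain ⟨j, hj⟩ := hg
    simp only at hj
    refine Finset.sum_eq_zero fun i hi => ?_
    simp only at hi
    rw [apply_ite (qMap k m), map_zero, qMap_single]
    have hbad : ¬((∀ a, ((f + single i 1 : Fin m →₀ ℕ)) a ≤ 1) ∧
        Disjoint (I.erase i) (f + single i 1).support) := by
      rw [not_good_iff (I.erase i, f + single i 1)]
      by_cases hji : j = i
      · subst hji
        refine ⟨j, Or.inl ?_⟩
        rw [Finsupp.add_apply, Finsupp.single_eq_same]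
        rcases hj with h | ⟨-, h2⟩ <;> omega
      · refine ⟨j, ?_⟩
        rw [Finsupp.add_apply, Finsupp.single_apply, if_neg (fun h => hji h.symm), add_zero]
        rcases hj with h | ⟨h1, h2⟩
        · exact Or.inl h
        · exact Or.inr ⟨Finset.mem_erase.mpr ⟨hji, h1⟩, h2⟩
    rw [if_neg hbad, smul_zero, ite_self]

lemma add_support_union (f g : Fin m →₀ ℕ) : (f + g).support = f.support ∪ g.support := by
  ext i
  simp only [Finsupp.mem_support_iff, Finsupp.add_apply, Finset.mem_union]
  omega

lemma sqf_disj {f g : Fin m →₀ ℕ} (h : ∀ i, (f + g) i ≤ 1) : Disjoint f.support g.support := by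
  rw [Finset.disjoint_left]
  intro a ha hb
  rw [Finsupp.mem_support_iff] at ha hb
  have := h a
  rw [Finsupp.add_apply] at this
  omega

lemma multSingle (K : Finset (Fin m) → Prop) [DecidablePred K]
    (p q : Finset (Fin m) × (Fin m →₀ ℕ)) :
    qMap k m (mulLSR k m K (single p 1) (single q 1)) =
      mulRbar k m K (qMap k m (single p 1)) (qMap k m (single q 1)) := by
  obtain ⟨I, f⟩ := p; obtain ⟨J, g⟩ := q
  rw [mulLSR_single, one_mul, one_smul, apply_ite (qMap k m), map_zero, qMap_single,
      qMap_single, qMap_single, one_smul, one_smul]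
  simp only
  by_cases hgp : (∀ i, f i ≤ 1) ∧ Disjoint I f.support
  · by_cases hgq : (∀ i, g i ≤ 1) ∧ Disjoint J g.support
    · rw [if_pos hgp, if_pos hgq, mulRbar_single, one_mul, one_smul]
      simp only
      by_cases hD : Disjoint (I ∪ f.support) (J ∪ g.support) ∧ K (f.support ∪ g.support)
      · obtain ⟨hD1, hD2⟩ := hD
        rw [Finset.disjoint_union_left, Finset.disjoint_union_right,
            Finset.disjoint_union_right] at hD1
        obtain ⟨⟨hIJ, hIg⟩, hfJ, hfg⟩ := hD1
        have hC : Disjoint I J ∧ K (f + g).support := by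
          rw [add_support_union]; exact ⟨hIJ, hD2⟩
        have hgood' : (∀ i, (f + g) i ≤ 1) ∧ Disjoint (I ∪ J) (f + g).support := by
          constructor
          · intro i
            rw [Finsupp.add_apply]
            have h1 := hgp.1 i
            have h2 := hgq.1 i
            have : f i = 0 ∨ g i = 0 := by
              by_contra hc
              push_neg at hc
              exact (Finset.disjoint_left.mp hfg (Finsupp.mem_support_iff.mpr hc.1))
                (Finsupp.mem_support_iff.mpr hc.2)
            omega
          · rw [add_support_union, Finset.disjoint_union_left, Finset.disjoint_union_right,
              Finset.disjoint_union_right]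
            exact ⟨⟨hgp.2, hIg⟩, hfJ.symm, hgq.2⟩
        rw [if_pos hC, if_pos hgood', if_pos ⟨by
              rw [Finset.disjoint_union_left, Finset.disjoint_union_right,
                Finset.disjoint_union_right]
              exact ⟨⟨hIJ, hIg⟩, hfJ, hfg⟩, hD2⟩,
          smul_single, smul_eq_mul, mul_one, add_support_union]
      · rw [if_neg hD]
        by_cases hC : Disjoint I J ∧ K (f + g).support
        · rw [if_pos hC, if_neg, smul_zero]
          rintro ⟨h1, h2⟩
          apply hD
          rw [add_support_union, Finset.disjoint_union_left, Finset.disjoint_union_right,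
            Finset.disjoint_union_right] at h2
          obtain ⟨⟨hIf, hIg⟩, hJf, hJg⟩ := h2
          refine ⟨?_, by rw [add_support_union] at hC; exact hC.2⟩
          rw [Finset.disjoint_union_left, Finset.disjoint_union_right,
            Finset.disjoint_union_right]
          exact ⟨⟨hC.1, hIg⟩, hJf.symm, sqf_disj h1⟩
        · rw [if_neg hC]
    · rw [if_neg hgq, map_zero]
      by_cases hC : Disjoint I J ∧ K (f + g).support
      · rw [if_pos hC, if_neg, smul_zero]
        rintro ⟨h1, h2⟩
        apply hgq
        constructor
        · intro i
          have := h1 i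
          rw [Finsupp.add_apply] at this
          omega
        · rw [add_support_union, Finset.disjoint_union_left, Finset.disjoint_union_right,
            Finset.disjoint_union_right] at h2
          exact h2.2.2
      · rw [if_neg hC]
  · rw [if_neg hgp, map_zero, LinearMap.zero_apply]
    by_cases hC : Disjoint I J ∧ K (f + g).support
    · rw [if_pos hC, if_neg, smul_zero]
      rintro ⟨h1, h2⟩
      apply hgp
      constructor
      · intro i
        have := h1 i
        rw [Finsupp.add_apply] at this
        omega
      · rw [add_support_union, Finset.disjoint_union_left, Finset.disjoint_union_right,
          Finset.disjoint_union_right] at h2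
        exact h2.1.1
    · rw [if_neg hC]

noncomputable def jMap (k : Type) [CommRing k] (m : ℕ) : RbarMod k m →ₗ[k] LSRMod k m :=
  Finsupp.lmapDomain k k (fun p => (p.1, chi p.2))

lemma jMap_single (p : Finset (Fin m) × Finset (Fin m)) (c : k) :
    jMap k m (single p c) = single (p.1, chi p.2) c := by
  simp [jMap, Finsupp.mapDomain_single]

lemma qMap_jMap (p : Finset (Fin m) × Finset (Fin m)) (hd : Disjoint p.1 p.2) :
    qMap k m (jMap k m (single p (1:k))) = single p 1 := by
  rw [jMap_single, qMap_single, if_pos, one_smul]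
  · simp
  · exact ⟨fun i => chi_sqfree p.2 i, by simpa using hd⟩

lemma dLSR_jMap (K : Finset (Fin m) → Prop) [DecidablePred K]
    (p : Finset (Fin m) × Finset (Fin m)) (hd : Disjoint p.1 p.2) :
    dLSR k m K (jMap k m (single p (1:k))) = jMap k m (dRbar k m K (single p 1)) := by
  obtain ⟨I, L⟩ := p
  rw [jMap_single, dLSR_single, dRbar_single, one_smul, one_smul, map_sum]
  simp only [chi_support]
  refine Finset.sum_congr rfl fun i hi => ?_
  have hiL : i ∉ L := Finset.disjoint_left.mp hd hi
  rw [apply_ite (jMap k m), map_zero, jMap_single]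
  by_cases hK : K (insert i L)
  · simp only [hK, hiL, not_false_eq_true, and_self, if_true]
    rw [chi_add_single hiL]
  · simp only [hK, and_false, if_false]

lemma surjPart (K : Finset (Fin m) → Prop) [DecidablePred K] :
    ∀ y ∈ Finsupp.supported k k {p : Finset (Fin m) × Finset (Fin m) |
        Disjoint p.1 p.2 ∧ K p.2},
      dRbar k m K y = 0 →
      ∃ x ∈ Finsupp.supported k k {p : Finset (Fin m) × (Fin m →₀ ℕ) | K p.2.support},
        dLSR k m K x = 0 ∧
        ∃ z ∈ Finsupp.supported k k {p : Finset (Fin m) × Finset (Fin m) |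
            Disjoint p.1 p.2 ∧ K p.2},
          qMap k m x - y = dRbar k m K z := by
  intro y hy hdy
  refine ⟨jMap k m y, ?_, ?_, 0, Submodule.zero_mem _, ?_⟩
  · refine maps_supported (jMap k m) (fun p hp => ?_) y hy
    rw [jMap_single]
    exact single_mem_supported' (by simpa using hp.2) 1
  · have := eqOn_supported ((dLSR k m K).comp (jMap k m)) ((jMap k m).comp (dRbar k m K))
      (fun p hp => by
        simp only [LinearMap.comp_apply]
        exact dLSR_jMap K p hp.1) y hy
    simp only [LinearMap.comp_apply] at this
    rw [this, hdy, map_zero]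
  · have := eqOn_supported ((qMap k m).comp (jMap k m)) (LinearMap.id)
      (fun p hp => by
        simp only [LinearMap.comp_apply, LinearMap.id_apply]
        exact qMap_jMap p hp.1) y hy
    simp only [LinearMap.comp_apply, LinearMap.id_apply] at this
    rw [this, sub_self, map_zero]

def badSet (I : Finset (Fin m)) (f : Fin m →₀ ℕ) : Finset (Fin m) :=
  Finset.univ.filter fun i => 2 ≤ f i ∨ (i ∈ I ∧ 1 ≤ f i)

lemma mem_badSet {I : Finset (Fin m)} {f : Fin m →₀ ℕ} {i : Fin m} :
    i ∈ badSet I f ↔ 2 ≤ f i ∨ (i ∈ I ∧ 1 ≤ f i) := by simp [badSet]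

lemma isBad_iff (p : Finset (Fin m) × (Fin m →₀ ℕ)) :
    IsBad p ↔ (badSet p.1 p.2).Nonempty := by
  constructor
  · rintro ⟨i, hi⟩; exact ⟨i, mem_badSet.mpr hi⟩
  · rintro ⟨i, hi⟩; exact ⟨i, mem_badSet.mp hi⟩

noncomputable def hFun (p : Finset (Fin m) × (Fin m →₀ ℕ)) : LSRMod k m :=
  if hb : (badSet p.1 p.2).Nonempty then
    if (badSet p.1 p.2).min' hb ∈ p.1 then 0
    else
      single (insert ((badSet p.1 p.2).min' hb) p.1, p.2 - single ((badSet p.1 p.2).min' hb) 1)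
        ((-1:k) ^ (((insert ((badSet p.1 p.2).min' hb) p.1).filter
            fun j => j ≤ (badSet p.1 p.2).min' hb).card + 1))
  else 0

noncomputable def hMap (k : Type) [CommRing k] (m : ℕ) : LSRMod k m →ₗ[k] LSRMod k m :=
  Finsupp.lift _ k _ hFun

lemma hMap_single (p : Finset (Fin m) × (Fin m →₀ ℕ)) (c : k) :
    hMap k m (single p c) = c • hFun p :=
  lift_single' k _ _ _

lemma hFun_eq_of_min {p : Finset (Fin m) × (Fin m →₀ ℕ)} {b : Fin m}
    (hmem : b ∈ badSet p.1 p.2) (hle : ∀ j ∈ badSet p.1 p.2, b ≤ j) :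
    hFun p = if b ∈ p.1 then 0 else
      single (insert b p.1, p.2 - single b 1)
        ((-1:k) ^ (((insert b p.1).filter fun j => j ≤ b).card + 1)) := by
  have hne : (badSet p.1 p.2).Nonempty := ⟨b, hmem⟩
  have hm : (badSet p.1 p.2).min' hne = b :=
    le_antisymm (Finset.min'_le _ _ hmem) (Finset.le_min' _ _ _ hle)
  simp only [hFun, dif_pos hne, hm]

lemma hFun_zero_of_empty {p : Finset (Fin m) × (Fin m →₀ ℕ)}
    (h : ¬ (badSet p.1 p.2).Nonempty) : hFun (k := k) p = 0 := by
  simp only [hFun, dif_neg h]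

/-- the bad set after one differential step only contains old bad indices -/
lemma badSet_step {I : Finset (Fin m)} {f : Fin m →₀ ℕ} {i : Fin m} (hi : i ∈ I) {j : Fin m}
    (hj : j ∈ badSet (I.erase i) (f + single i 1)) : j ∈ badSet I f := by
  rw [mem_badSet] at hj ⊢
  by_cases hji : j = i
  · subst hji
    rcases hj with h | ⟨h1, -⟩
    · rw [Finsupp.add_apply, Finsupp.single_eq_same] at h
      exact Or.inr ⟨hi, by omega⟩
    · exact absurd h1 (Finset.notMem_erase j I)
  · rw [Finsupp.add_apply, Finsupp.single_apply, if_neg (fun h => hji h.symm), add_zero] at hj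
    rcases hj with h | ⟨h1, h2⟩
    · exact Or.inl h
    · exact Or.inr ⟨(Finset.mem_erase.mp h1).2, h2⟩

lemma badSet_step_mem {I : Finset (Fin m)} {f : Fin m →₀ ℕ} {i b : Fin m} (hi : i ∈ I)
    (hb : b ∈ badSet I f) : b ∈ badSet (I.erase i) (f + single i 1) := by
  rw [mem_badSet] at hb ⊢
  by_cases hbi : b = i
  · subst hbi
    refine Or.inl ?_
    rw [Finsupp.add_apply, Finsupp.single_eq_same]
    rcases hb with h | ⟨-, h⟩ <;> omega
  · rw [Finsupp.add_apply, Finsupp.single_apply, if_neg (fun h => hbi h.symm), add_zero]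
    rcases hb with h | ⟨h1, h2⟩
    · exact Or.inl h
    · exact Or.inr ⟨Finset.mem_erase.mpr ⟨hbi, h1⟩, h2⟩

lemma neg_one_pow_add_eq_zero {x y : ℕ} (h : (x + y) % 2 = 1) : (-1:k)^x + (-1:k)^y = 0 := by
  rcases Nat.even_or_odd x with hx | hx
  · have hy : Odd y := by rw [Nat.odd_iff]; rw [Nat.even_iff] at hx; omega
    rw [hx.neg_one_pow, hy.neg_one_pow]; ring
  · have hy : Even y := by rw [Nat.even_iff]; rw [Nat.odd_iff] at hx; omega
    rw [hx.neg_one_pow, hy.neg_one_pow]; ring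

lemma homotopy (K : Finset (Fin m) → Prop) [DecidablePred K] (I : Finset (Fin m))
    (f : Fin m →₀ ℕ) (hK : K f.support) (hb : (badSet I f).Nonempty) :
    dLSR k m K (hMap k m (single (I, f) 1)) + hMap k m (dLSR k m K (single (I, f) 1))
      = single (I, f) 1 := by
  have hbbad : (badSet I f).min' hb ∈ badSet I f := Finset.min'_mem _ _
  set b := (badSet I f).min' hb with hbdef
  have hble : ∀ j ∈ badSet I f, b ≤ j := fun j hj => Finset.min'_le _ _ hj
  rw [hMap_single, one_smul, hFun_eq_of_min (p := (I, f)) hbbad hble]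
  by_cases hbI : b ∈ I
  · rw [if_pos hbI, map_zero, zero_add, dLSR_single, one_smul, map_sum]
    have hfb : 1 ≤ f b := by rcases mem_badSet.mp hbbad with h | ⟨-, h⟩ <;> omega
    rw [Finset.sum_eq_single b]
    · -- main term i = b
      have hbsupp : insert b f.support = f.support :=
        Finset.insert_eq_self.mpr (Finsupp.mem_support_iff.mpr (by omega))
      simp only
      rw [if_pos (show K (insert b f.support) by rw [hbsupp]; exact hK), hMap_single,
        hFun_eq_of_min (p := (I.erase b, f + single b 1)) (badSet_step_mem hbI hbbad)
          (fun j hj => hble j (badSet_step hbI hj)),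
        if_neg (Finset.notMem_erase b I)]
      simp only
      rw [Finset.insert_erase hbI]
      have hcancel : f + single b 1 - single b 1 = f := by
        ext j
        simp only [Finsupp.tsub_apply, Finsupp.add_apply, Finsupp.single_apply]
        omega
      rw [hcancel, smul_single, smul_eq_mul, ← pow_add]
      norm_num
    · -- other terms
      intro i hi hib
      simp only at hi ⊢
      by_cases hK2 : K (insert i f.support)
      · rw [if_pos hK2, hMap_single,
          hFun_eq_of_min (p := (I.erase i, f + single i 1)) (badSet_step_mem hi hbbad)
            (fun j hj => hble j (badSet_step hi hj)),
          if_pos (Finset.mem_erase.mpr ⟨Ne.symm hib, hbI⟩), smul_zero]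
      · rw [if_neg hK2, map_zero]
    · intro h; exact absurd hbI h
  · have hfb2 : 2 ≤ f b := by
      rcases mem_badSet.mp hbbad with h | ⟨h, -⟩
      · exact h
      · exact absurd h hbI
    rw [if_neg hbI, dLSR_single (p := (insert b I, f - single b 1))]
    simp only
    rw [sub_support hfb2, Finset.sum_insert hbI]
    have hbsupp : insert b f.support = f.support :=
      Finset.insert_eq_self.mpr (Finsupp.mem_support_iff.mpr (by omega))
    rw [if_pos (show K (insert b f.support) by rw [hbsupp]; exact hK),
      Finset.erase_insert hbI, subAddCancel (by omega : 1 ≤ f b), smul_add, smul_single,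
      smul_eq_mul, ← pow_add]
    have hone : ((-1:k) ^ (((insert b I).filter fun j => j ≤ b).card + 1 +
        (((insert b I).filter fun j => j ≤ b).card + 1))) = 1 :=
      Even.neg_one_pow ⟨((insert b I).filter fun j => j ≤ b).card + 1, by ring⟩
    rw [hone]
    have hmain : ((-1:k) ^ (((insert b I).filter fun j => j ≤ b).card + 1)) •
          (∑ i ∈ I, if K (insert i f.support) then
            (single ((insert b I).erase i, f - single b 1 + single i 1)
              ((-1:k) ^ (((insert b I).filter fun j => j ≤ i).card + 1)) : LSRMod k m)
          else 0)
        + hMap k m (dLSR k m K (single (I, f) 1)) = 0 := by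
      rw [dLSR_single, one_smul, map_sum, Finset.smul_sum, ← Finset.sum_add_distrib]
      refine Finset.sum_eq_zero fun i hi => ?_
      simp only
      have hib : i ≠ b := fun h => hbI (h ▸ hi)
      by_cases hK2 : K (insert i f.support)
      · rw [if_pos hK2, if_pos hK2, hMap_single,
          hFun_eq_of_min (p := (I.erase i, f + single i 1)) (badSet_step_mem hi hbbad)
            (fun j hj => hble j (badSet_step hi hj)),
          if_neg (fun hc => hbI (Finset.mem_of_mem_erase hc))]
        simp only
        rw [Finset.erase_insert_of_ne (Ne.symm hib), subAddComm (by omega : 1 ≤ f b),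
          smul_single, smul_single, smul_eq_mul, smul_eq_mul, ← pow_add, ← pow_add,
          ← single_add]
        rw [neg_one_pow_add_eq_zero ?_, single_zero]
        -- parity bookkeeping
        have h1 : ((insert b I).filter fun j => j ≤ b).card =
            (I.filter fun j => j ≤ b).card + 1 := by
          rw [Finset.filter_insert, if_pos le_rfl,
            Finset.card_insert_of_notMem (fun hc => hbI (Finset.mem_of_mem_filter _ hc))]
        have h3 : ((insert b (I.erase i)).filter fun j => j ≤ b).card =
            ((I.erase i).filter fun j => j ≤ b).card + 1 := by
          rw [Finset.filter_insert, if_pos le_rfl,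
            Finset.card_insert_of_notMem
              (fun hc => hbI (Finset.mem_of_mem_erase (Finset.mem_of_mem_filter _ hc)))]
        rw [h1, h3, Finset.filter_erase]
        rcases lt_or_gt_of_ne hib with hlt | hgt
        · -- i < b
          have h2 : ((insert b I).filter fun j => j ≤ i).card =
              (I.filter fun j => j ≤ i).card := by
            rw [Finset.filter_insert, if_neg (by exact fun hc => absurd (lt_of_le_of_lt hc hlt) (lt_irrefl b))]
          have hmem : i ∈ I.filter fun j => j ≤ b := Finset.mem_filter.mpr ⟨hi, le_of_lt hlt⟩
          rw [h2, Finset.card_erase_of_mem hmem]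
          have hpos : 1 ≤ (I.filter fun j => j ≤ b).card :=
            Finset.card_pos.mpr ⟨i, hmem⟩
          omega
        · -- b < i
          have h2 : ((insert b I).filter fun j => j ≤ i).card =
              (I.filter fun j => j ≤ i).card + 1 := by
            rw [Finset.filter_insert, if_pos (le_of_lt hgt),
              Finset.card_insert_of_notMem (fun hc => hbI (Finset.mem_of_mem_filter _ hc))]
          have hnotmem : i ∉ (I.filter fun j => j ≤ b) := by
            intro hc
            exact absurd (Finset.mem_filter.mp hc).2 (not_le.mpr hgt)
          rw [h2, Finset.erase_eq_of_notMem hnotmem]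
          omega
      · rw [if_neg hK2, if_neg hK2, map_zero, smul_zero, add_zero]
    rw [add_assoc, hmain, add_zero]

lemma qMap_apply_chi (x : LSRMod k m) (I L : Finset (Fin m)) (hd : Disjoint I L) :
    qMap k m x (I, L) = x (I, chi L) := by
  conv_lhs => rw [← Finsupp.sum_single x, map_finsuppSum]
  rw [Finsupp.sum_apply, Finsupp.sum]
  rw [Finset.sum_eq_single ((I, chi L) : Finset (Fin m) × (Fin m →₀ ℕ))]
  · rw [qMap_single, if_pos ⟨fun i => chi_sqfree L i, by simpa using hd⟩]
    simp [chi_support]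
  · intro p hp hne
    rw [qMap_single]
    by_cases hg : (∀ i, p.2 i ≤ 1) ∧ Disjoint p.1 p.2.support
    · rw [if_pos hg, Finsupp.smul_apply, Finsupp.single_apply, if_neg, smul_zero]
      intro hc
      apply hne
      have hL : p.2.support = L := congrArg Prod.snd hc
      have h1 : p.1 = I := congrArg Prod.fst hc
      have h2 : p.2 = chi L := (sqfree_eq_chi hg.1).trans (by rw [hL])
      exact Prod.ext h1 h2
    · rw [if_neg hg]; simp
  · intro h
    rw [Finsupp.notMem_support_iff.mp h]
    simp

lemma hFun_supported {K : Finset (Fin m) → Prop} [DecidablePred K]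
    (p : Finset (Fin m) × (Fin m →₀ ℕ)) (hp : K p.2.support) :
    hFun (k := k) p ∈ Finsupp.supported k k
      {p : Finset (Fin m) × (Fin m →₀ ℕ) | K p.2.support} := by
  by_cases hb : (badSet p.1 p.2).Nonempty
  · have hbbad := Finset.min'_mem _ hb
    set b := (badSet p.1 p.2).min' hb with hbdef
    rw [hFun_eq_of_min hbbad (fun j hj => Finset.min'_le _ _ hj)]
    by_cases hbI : b ∈ p.1
    · rw [if_pos hbI]; exact Submodule.zero_mem _
    · rw [if_neg hbI]
      have hfb2 : 2 ≤ p.2 b := by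
        rcases mem_badSet.mp hbbad with h | ⟨h, -⟩
        · exact h
        · exact absurd h hbI
      refine single_mem_supported' (Iff.rfl.mpr ?_) _
      show K ((p.2 - single b 1 : Fin m →₀ ℕ)).support
      rw [sub_support hfb2]; exact hp
  · rw [hFun_zero_of_empty hb]; exact Submodule.zero_mem _


variable (k m K)

theorem quotient_map_is_dga_quasi_iso :
    -- q is a chain map
    (qMap k m).comp (dLSR k m K) = (dRbar k m K).comp (qMap k m) ∧
    -- q is multiplicative
    (∀ p q : Finset (Fin m) × (Fin m →₀ ℕ),
      qMap k m (mulLSR k m K (Finsupp.single p 1) (Finsupp.single q 1)) =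
        mulRbar k m K (qMap k m (Finsupp.single p 1)) (qMap k m (Finsupp.single q 1))) ∧
    -- q is surjective on cohomology
    (∀ y ∈ Finsupp.supported k k {p : Finset (Fin m) × Finset (Fin m) |
        Disjoint p.1 p.2 ∧ K p.2},
      dRbar k m K y = 0 →
      ∃ x ∈ Finsupp.supported k k {p : Finset (Fin m) × (Fin m →₀ ℕ) | K p.2.support},
        dLSR k m K x = 0 ∧
        ∃ z ∈ Finsupp.supported k k {p : Finset (Fin m) × Finset (Fin m) |
            Disjoint p.1 p.2 ∧ K p.2},
          qMap k m x - y = dRbar k m K z) ∧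
    -- q is injective on cohomology
    (∀ x ∈ Finsupp.supported k k {p : Finset (Fin m) × (Fin m →₀ ℕ) | K p.2.support},
      dLSR k m K x = 0 →
      (∃ z ∈ Finsupp.supported k k {p : Finset (Fin m) × Finset (Fin m) |
          Disjoint p.1 p.2 ∧ K p.2}, qMap k m x = dRbar k m K z) →
      ∃ w ∈ Finsupp.supported k k {p : Finset (Fin m) × (Fin m →₀ ℕ) | K p.2.support},
        dLSR k m K w = x) := by
  refine ⟨chainMap K, multSingle K, surjPart K, ?_⟩
  rintro x hx hdx ⟨z, hz, hqz⟩
  -- qMap x is supported on the admissible R̄ pairs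
  have hqx_supp : qMap k m x ∈ Finsupp.supported k k
      {p : Finset (Fin m) × Finset (Fin m) | Disjoint p.1 p.2 ∧ K p.2} := by
    refine maps_supported (qMap k m) (fun p hp => ?_) x hx
    rw [qMap_single, one_smul]
    by_cases hg : (∀ i, p.2 i ≤ 1) ∧ Disjoint p.1 p.2.support
    · rw [if_pos hg]
      exact single_mem_supported' (show (p.1, p.2.support) ∈ {p : Finset (Fin m) × Finset (Fin m) | Disjoint p.1 p.2 ∧ K p.2} from ⟨hg.2, hp⟩) _
    · rw [if_neg hg]; exact Submodule.zero_mem _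
  have hjq_supp : jMap k m (qMap k m x) ∈ Finsupp.supported k k
      {p : Finset (Fin m) × (Fin m →₀ ℕ) | K p.2.support} := by
    refine maps_supported (jMap k m) (fun p hp => ?_) _ hqx_supp
    rw [jMap_single]
    exact single_mem_supported' (by simpa using hp.2) _
  set u := x - jMap k m (qMap k m x) with hu
  have hu_supp : u ∈ Finsupp.supported k k
      {p : Finset (Fin m) × (Fin m →₀ ℕ) | K p.2.support} :=
    Submodule.sub_mem _ hx hjq_supp
  have hdrq : dRbar k m K (qMap k m x) = 0 := by
    have := LinearMap.congr_fun (chainMap (k := k) (m := m) K) x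
    simp only [LinearMap.comp_apply] at this
    rw [← this, hdx, map_zero]
  have hdu : dLSR k m K u = 0 := by
    rw [hu, map_sub, hdx, zero_sub, neg_eq_zero]
    have := eqOn_supported ((dLSR k m K).comp (jMap k m)) ((jMap k m).comp (dRbar k m K))
      (fun p hp => by
        simp only [LinearMap.comp_apply]
        exact dLSR_jMap K p hp.1) _ hqx_supp
    simp only [LinearMap.comp_apply] at this
    rw [this, hdrq, map_zero]
  have hqu : qMap k m u = 0 := by
    rw [hu, map_sub]
    have := eqOn_supported ((qMap k m).comp (jMap k m)) (LinearMap.id)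
      (fun p hp => by
        simp only [LinearMap.comp_apply, LinearMap.id_apply]
        exact qMap_jMap p hp.1) _ hqx_supp
    simp only [LinearMap.comp_apply, LinearMap.id_apply] at this
    rw [this, sub_self]
  have hu_bad : u ∈ Finsupp.supported k k
      {p : Finset (Fin m) × (Fin m →₀ ℕ) | IsBad p ∧ K p.2.support} := by
    rw [Finsupp.mem_supported]
    intro p hp
    have hK : K p.2.support := ((Finsupp.mem_supported k u).mp hu_supp) hp
    refine ⟨?_, hK⟩
    by_contra hbad
    have hg : (∀ i, p.2 i ≤ 1) ∧ Disjoint p.1 p.2.support := by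
      by_contra hc
      exact hbad ((not_good_iff p).mp hc)
    have hup : u p ≠ 0 := Finsupp.mem_support_iff.mp hp
    apply hup
    have h2 : u p = qMap k m u (p.1, p.2.support) := by
      rw [qMap_apply_chi u p.1 p.2.support hg.2]
      congr 1
      exact Prod.ext rfl (sqfree_eq_chi hg.1)
    rw [h2, hqu]
    rfl
  have hid := eqOn_supported
    ((dLSR k m K).comp (hMap k m) + (hMap k m).comp (dLSR k m K)) LinearMap.id
    (fun p hp => by
      simp only [LinearMap.add_apply, LinearMap.comp_apply, LinearMap.id_apply]
      exact homotopy K p.1 p.2 hp.2 ((isBad_iff p).mp hp.1)) u hu_bad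
  simp only [LinearMap.add_apply, LinearMap.comp_apply, LinearMap.id_apply] at hid
  rw [hdu, map_zero, add_zero] at hid
  refine ⟨hMap k m u + jMap k m z, ?_, ?_⟩
  · refine Submodule.add_mem _ ?_ ?_
    · refine maps_supported (hMap k m) (fun p hp => ?_) u hu_supp
      rw [hMap_single, one_smul]
      exact hFun_supported p hp
    · refine maps_supported (jMap k m) (fun p hp => ?_) z hz
      rw [jMap_single]
      exact single_mem_supported' (by simpa using hp.2) _
  · rw [map_add, hid]
    have hdjz := eqOn_supported ((dLSR k m K).comp (jMap k m)) ((jMap k m).comp (dRbar k m K))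
      (fun p hp => by
        simp only [LinearMap.comp_apply]
        exact dLSR_jMap K p hp.1) z hz
    simp only [LinearMap.comp_apply] at hdjz
    rw [hdjz, ← hqz, hu]
    abel
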